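/- arXiv:1808.08264 — 6 statements merged into one kernel-verified Lean document; each statement's English description precedes it below -/
import Mathlib

section
/- Let 𝐗₁ = (X₁; Y₁) and 𝐗₂ = (X₂; Y₂) be frames for Lagrangian subspaces ℓ₁ and ℓ₂ of ℂ^{2n}. Then dim ker(𝐗₁* J 𝐗₂) = dim(ℓ₁ ∩ ℓ₂), and more precisely ℓ₁ ∩ ℓ₂ equals the image of ker(𝐗₁* J 𝐗₂) under the map v ↦ 𝐗₂ v. -/
open Matrix

noncomputable section

def Jmat (n : ℕ) : Matrix (Fin n ⊕ Fin n) (Fin n ⊕ Fin n) ℂ :=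
  Matrix.fromBlocks 0 (-1) 1 0

/-- The `2n × n` matrix with `n × n` blocks `X` (top) and `Y` (bottom). -/
def frame {n : ℕ} (X Y : Matrix (Fin n) (Fin n) ℂ) :
    Matrix (Fin n ⊕ Fin n) (Fin n) ℂ :=
  Matrix.fromRows X Y

/-- A subspace `ℓ ⊆ ℂ^{2n}` is Lagrangian if it has dimension `n` and
`(Ju, v) = 0` for all `u, v ∈ ℓ`. -/
def IsLagrangianSubspace (n : ℕ) (ℓ : Submodule ℂ ((Fin n ⊕ Fin n) → ℂ)) : Prop :=
  Module.finrank ℂ ℓ = n ∧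
    ∀ u ∈ ℓ, ∀ v ∈ ℓ, star ((Jmat n) *ᵥ u) ⬝ᵥ v = 0

/-- The column span of the frame `(X; Y)`. -/
def frameSpan {n : ℕ} (X Y : Matrix (Fin n) (Fin n) ℂ) :
    Submodule ℂ ((Fin n ⊕ Fin n) → ℂ) :=
  Submodule.span ℂ (Set.range (frame X Y)ᵀ)

/-- `(X; Y)` is a frame for a Lagrangian subspace of `ℂ^{2n}`:
its columns span a Lagrangian subspace. -/
def IsLagrangianFrame {n : ℕ} (X Y : Matrix (Fin n) (Fin n) ℂ) : Prop :=
  IsLagrangianSubspace n (frameSpan X Y)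

lemma Jmat_mul_neg (n : ℕ) : Jmat n * (-Jmat n) = 1 := by
  simp [Jmat, Matrix.fromBlocks_multiply, ← Matrix.fromBlocks_one, Matrix.fromBlocks_neg]

lemma isUnit_Jmat_det (n : ℕ) : IsUnit (Jmat n).det :=
  IsUnit.of_mul_eq_one (-Jmat n).det (by rw [← Matrix.det_mul, Jmat_mul_neg, Matrix.det_one])

lemma frameSpan_eq_range {n : ℕ} (X Y : Matrix (Fin n) (Fin n) ℂ) :
    frameSpan X Y = LinearMap.range (frame X Y).mulVecLin :=
  (Matrix.range_mulVecLin _).symm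

lemma rank_frame {n : ℕ} {X Y : Matrix (Fin n) (Fin n) ℂ} (h : IsLagrangianFrame X Y) :
    (frame X Y).rank = n := by
  rw [Matrix.rank, ← frameSpan_eq_range]
  exact h.1

lemma ker_frameMulVecLin {n : ℕ} {X Y : Matrix (Fin n) (Fin n) ℂ} (h : IsLagrangianFrame X Y) :
    LinearMap.ker (frame X Y).mulVecLin = ⊥ := by
  have h1 := LinearMap.finrank_range_add_finrank_ker (frame X Y).mulVecLin
  rw [← frameSpan_eq_range, h.1, Module.finrank_fintype_fun_eq_card, Fintype.card_fin] at h1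
  have : Module.finrank ℂ (LinearMap.ker (frame X Y).mulVecLin) = 0 := by omega
  exact Submodule.finrank_eq_zero.mp this

open ComplexOrder in
lemma ker_XhJ {n : ℕ} {X Y : Matrix (Fin n) (Fin n) ℂ} (h : IsLagrangianFrame X Y) :
    LinearMap.ker ((frame X Y)ᴴ * Jmat n).mulVecLin = frameSpan X Y := by
  symm
  have hle : frameSpan X Y ≤ LinearMap.ker ((frame X Y)ᴴ * Jmat n).mulVecLin := by
    intro w hw
    rw [LinearMap.mem_ker, Matrix.mulVecLin_mul]
    funext i
    have hcol : (frame X Y)ᵀ i ∈ frameSpan X Y := Submodule.subset_span ⟨i, rfl⟩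
    have h0 := h.2 w hw ((frame X Y)ᵀ i) hcol
    have : ((frame X Y)ᴴ *ᵥ (Jmat n *ᵥ w)) i
        = star (star (Jmat n *ᵥ w) ⬝ᵥ (frame X Y)ᵀ i) := by
      simp [Matrix.mulVec, dotProduct, Matrix.conjTranspose_apply, mul_comm]
    rw [LinearMap.comp_apply]
    simp only [Matrix.mulVecLin_apply, Pi.zero_apply]
    rw [this, h0, star_zero]
  apply Submodule.eq_of_le_of_finrank_eq hle
  have h1 := LinearMap.finrank_range_add_finrank_ker ((frame X Y)ᴴ * Jmat n).mulVecLin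
  have hrank : ((frame X Y)ᴴ * Jmat n).rank = n := by
    rw [Matrix.rank_mul_eq_left_of_isUnit_det _ _ (isUnit_Jmat_det n),
      Matrix.rank_conjTranspose, rank_frame h]
  rw [show Module.finrank ℂ (LinearMap.range ((frame X Y)ᴴ * Jmat n).mulVecLin)
      = ((frame X Y)ᴴ * Jmat n).rank from rfl, hrank,
    Module.finrank_fintype_fun_eq_card, Fintype.card_sum, Fintype.card_fin] at h1
  rw [h.1]
  omega

/-- For frames `𝐗₁ = (X₁; Y₁)`, `𝐗₂ = (X₂; Y₂)` of Lagrangian subspaces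
`ℓ₁`, `ℓ₂` of `ℂ^{2n}`, `dim ker(𝐗₁* J 𝐗₂) = dim(ℓ₁ ∩ ℓ₂)`, and more precisely `ℓ₁ ∩ ℓ₂`
equals the image of `ker(𝐗₁* J 𝐗₂)` under `v ↦ 𝐗₂ v`. -/
theorem ker_eq_intersection {n : ℕ} (X₁ Y₁ X₂ Y₂ : Matrix (Fin n) (Fin n) ℂ)
    (h₁ : IsLagrangianFrame X₁ Y₁) (h₂ : IsLagrangianFrame X₂ Y₂) :
    Module.finrank ℂ (LinearMap.ker ((frame X₁ Y₁)ᴴ * Jmat n * frame X₂ Y₂).mulVecLin) =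
      Module.finrank ℂ (frameSpan X₁ Y₁ ⊓ frameSpan X₂ Y₂ : Submodule ℂ ((Fin n ⊕ Fin n) → ℂ)) ∧
    Submodule.map (frame X₂ Y₂).mulVecLin
        (LinearMap.ker ((frame X₁ Y₁)ᴴ * Jmat n * frame X₂ Y₂).mulVecLin) =
      frameSpan X₁ Y₁ ⊓ frameSpan X₂ Y₂ := by
  have hinj : Function.Injective (frame X₂ Y₂).mulVecLin :=
    LinearMap.ker_eq_bot.mp (ker_frameMulVecLin h₂)
  have hmap : Submodule.map (frame X₂ Y₂).mulVecLin
        (LinearMap.ker ((frame X₁ Y₁)ᴴ * Jmat n * frame X₂ Y₂).mulVecLin) =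
      frameSpan X₁ Y₁ ⊓ frameSpan X₂ Y₂ := by
    rw [Matrix.mulVecLin_mul, LinearMap.ker_comp, Submodule.map_comap_eq,
      ker_XhJ h₁, frameSpan_eq_range X₂ Y₂, inf_comm]
  refine ⟨?_, hmap⟩
  rw [← hmap]
  exact (Submodule.equivMapOfInjective _ hinj _).finrank_eq
end
end

section
/- Let 𝐗₁ = (X₁; Y₁) and 𝐗₂ = (X₂; Y₂) be frames for Lagrangian subspaces ℓ₁ and ℓ₂ of ℂ^{2n}. Then dim ker(W̃ + I) = dim(ℓ₁ ∩ ℓ₂); i.e., the multiplicity of −1 as an eigenvalue of the unitary matrix W̃ equals the dimension of the intersection ℓ₁ ∩ ℓ₂. -/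
open Matrix

noncomputable section

/-- `W̃ := −(X₁ + iY₁)(X₁ − iY₁)⁻¹(X₂ − iY₂)(X₂ + iY₂)⁻¹`. -/
def tW {n : ℕ} (X₁ Y₁ X₂ Y₂ : Matrix (Fin n) (Fin n) ℂ) : Matrix (Fin n) (Fin n) ℂ :=
  -((X₁ + Complex.I • Y₁) * (X₁ - Complex.I • Y₁)⁻¹ *
    ((X₂ - Complex.I • Y₂) * (X₂ + Complex.I • Y₂)⁻¹))

namespace LagAux

variable {n : ℕ} {X Y : Matrix (Fin n) (Fin n) ℂ}

lemma frame_mulVec (X Y : Matrix (Fin n) (Fin n) ℂ) (v : Fin n → ℂ) :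
    frame X Y *ᵥ v = Sum.elim (X *ᵥ v) (Y *ᵥ v) :=
  Matrix.fromRows_mulVec X Y v

lemma frameSpan_eq_range (X Y : Matrix (Fin n) (Fin n) ℂ) :
    frameSpan X Y = LinearMap.range (frame X Y).mulVecLin :=
  ((frame X Y).range_mulVecLin).symm

lemma frame_injective (h : IsLagrangianFrame X Y) :
    Function.Injective (frame X Y).mulVecLin := by
  rw [← LinearMap.ker_eq_bot]
  have hrange : Module.finrank ℂ (LinearMap.range (frame X Y).mulVecLin) = n := by
    rw [← frameSpan_eq_range]; exact h.1
  have htot := LinearMap.finrank_range_add_finrank_ker (frame X Y).mulVecLin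
  rw [hrange, Module.finrank_pi] at htot
  simp only [Fintype.card_fin] at htot
  have : Module.finrank ℂ (LinearMap.ker (frame X Y).mulVecLin) = 0 := by omega
  exact Submodule.finrank_eq_zero.mp this

lemma cross (h : IsLagrangianFrame X Y) (u : Fin n → ℂ) :
    star (X *ᵥ u) ⬝ᵥ (Y *ᵥ u) = star (Y *ᵥ u) ⬝ᵥ (X *ᵥ u) := by
  have hm : frame X Y *ᵥ u ∈ frameSpan X Y := by
    rw [frameSpan_eq_range]
    exact ⟨u, rfl⟩
  have := h.2 _ hm _ hm
  rw [frame_mulVec] at this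
  have hJ : (Jmat n) *ᵥ Sum.elim (X *ᵥ u) (Y *ᵥ u)
      = Sum.elim (-(Y *ᵥ u)) (X *ᵥ u) := by
    rw [Jmat, Matrix.fromBlocks_mulVec]
    simp [Matrix.neg_mulVec]
  rw [hJ] at this
  have hstar : star (Sum.elim (-(Y *ᵥ u)) (X *ᵥ u))
      = Sum.elim (star (-(Y *ᵥ u))) (star (X *ᵥ u)) := by
    funext i; cases i <;> rfl
  rw [hstar, sumElim_dotProduct_sumElim, star_neg,
    neg_dotProduct] at this
  linear_combination this

end LagAux

namespace LagAux

lemma isUnit_det (h : IsLagrangianFrame X Y) (c : ℂ) (hc : star c = -c)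
    (hc2 : c * c = -1) : IsUnit (X + c • Y).det := by
  rw [isUnit_iff_ne_zero]
  intro hdet
  obtain ⟨v, hv, hMv⟩ := (Matrix.exists_mulVec_eq_zero_iff).mpr hdet
  have hexp : (X + c • Y) *ᵥ v = X *ᵥ v + c • (Y *ᵥ v) := by
    rw [Matrix.add_mulVec, Matrix.smul_mulVec]
  set p := X *ᵥ v with hp
  set q := Y *ᵥ v with hq
  have hzero : p + c • q = 0 := by rw [← hexp, hMv]
  have hdot : star (p + c • q) ⬝ᵥ (p + c • q) = 0 := by rw [hzero]; simp
  have hcross := cross h v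
  rw [← hp, ← hq] at hcross
  rw [show star (p + c • q) = star p + (-c) • star q by rw [← hc]; simp [star_smul]]
    at hdot
  rw [add_dotProduct, dotProduct_add, dotProduct_add,
    smul_dotProduct, smul_dotProduct, dotProduct_smul,
    dotProduct_smul, ← hcross] at hdot
  have hdot2 : star p ⬝ᵥ p + star q ⬝ᵥ q = 0 := by
    simp only [smul_eq_mul] at hdot
    linear_combination hdot + (star q ⬝ᵥ q) * hc2
  open ComplexOrder in
  have hpq := (add_eq_zero_iff_of_nonneg (dotProduct_star_self_nonneg p)
    (dotProduct_star_self_nonneg q)).mp hdot2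
  have hp0 : p = 0 := dotProduct_star_self_eq_zero.mp hpq.1
  have hq0 : q = 0 := dotProduct_star_self_eq_zero.mp hpq.2
  apply hv
  apply frame_injective h
  show (frame X Y).mulVecLin v = (frame X Y).mulVecLin 0
  simp only [Matrix.mulVecLin_apply, Matrix.mulVec_zero, frame_mulVec, ← hp, ← hq,
    hp0, hq0]
  simp

end LagAux

namespace LagAux

lemma pq_eq {V : Type*} [AddCommGroup V] [Module ℂ V] {p₁ q₁ p₂ q₂ : V}
    (h1 : p₁ + Complex.I • q₁ = p₂ + Complex.I • q₂)
    (h2 : p₁ - Complex.I • q₁ = p₂ - Complex.I • q₂) : p₁ = p₂ ∧ q₁ = q₂ := by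
  have hq : (2 * Complex.I) • q₁ = (2 * Complex.I) • q₂ := by
    have h3 := congrArg₂ (· - ·) h1 h2
    linear_combination (norm := module) h3
  have hq' : q₁ = q₂ := smul_right_injective V (by simp [Complex.I_ne_zero]) hq
  refine ⟨?_, hq'⟩
  rw [hq'] at h1
  exact add_right_cancel h1

end LagAux

/-- For frames `𝐗₁ = (X₁; Y₁)`, `𝐗₂ = (X₂; Y₂)` of Lagrangian subspaces
`ℓ₁`, `ℓ₂` of `ℂ^{2n}`, `dim ker(W̃ + I) = dim(ℓ₁ ∩ ℓ₂)`: the multiplicity of `−1` as an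
eigenvalue of the unitary matrix `W̃` equals the dimension of `ℓ₁ ∩ ℓ₂`. -/
theorem ker_tW_add_one_eq_dim_inter {n : ℕ} (X₁ Y₁ X₂ Y₂ : Matrix (Fin n) (Fin n) ℂ)
    (h₁ : IsLagrangianFrame X₁ Y₁) (h₂ : IsLagrangianFrame X₂ Y₂) :
    Module.finrank ℂ (LinearMap.ker (tW X₁ Y₁ X₂ Y₂ + 1).mulVecLin) =
      Module.finrank ℂ (frameSpan X₁ Y₁ ⊓ frameSpan X₂ Y₂ : Submodule ℂ ((Fin n ⊕ Fin n) → ℂ)) := by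
  classical
  set A₁ := X₁ + Complex.I • Y₁ with hA₁def
  set B₁ := X₁ - Complex.I • Y₁ with hB₁def
  set A₂ := X₂ + Complex.I • Y₂ with hA₂def
  set B₂ := X₂ - Complex.I • Y₂ with hB₂def
  have hsub : ∀ (X Y : Matrix (Fin n) (Fin n) ℂ),
      X - Complex.I • Y = X + (-Complex.I) • Y := by
    intro X Y; rw [sub_eq_add_neg, neg_smul]
  have hA₁ : IsUnit A₁.det := LagAux.isUnit_det h₁ _ Complex.conj_I Complex.I_mul_I
  have hA₂ : IsUnit A₂.det := LagAux.isUnit_det h₂ _ Complex.conj_I Complex.I_mul_I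
  have hB₁ : IsUnit B₁.det := by
    rw [hB₁def, hsub]
    exact LagAux.isUnit_det h₁ (-Complex.I) (by simp [Complex.conj_I])
      (by linear_combination Complex.I_mul_I)
  have hB₂ : IsUnit B₂.det := by
    rw [hB₂def, hsub]
    exact LagAux.isUnit_det h₂ (-Complex.I) (by simp [Complex.conj_I])
      (by linear_combination Complex.I_mul_I)
  have hA₂i : ∀ x, A₂⁻¹ *ᵥ (A₂ *ᵥ x) = x := fun x => by
    rw [Matrix.mulVec_mulVec, Matrix.nonsing_inv_mul _ hA₂, Matrix.one_mulVec]
  have hA₂i' : ∀ x, A₂ *ᵥ (A₂⁻¹ *ᵥ x) = x := fun x => by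
    rw [Matrix.mulVec_mulVec, Matrix.mul_nonsing_inv _ hA₂, Matrix.one_mulVec]
  have hB₁i : ∀ x, B₁⁻¹ *ᵥ (B₁ *ᵥ x) = x := fun x => by
    rw [Matrix.mulVec_mulVec, Matrix.nonsing_inv_mul _ hB₁, Matrix.one_mulVec]
  have hexpA : ∀ (X Y : Matrix (Fin n) (Fin n) ℂ) (x : Fin n → ℂ),
      (X + Complex.I • Y) *ᵥ x = X *ᵥ x + Complex.I • (Y *ᵥ x) := fun X Y x => by
    rw [Matrix.add_mulVec, Matrix.smul_mulVec]
  have hexpB : ∀ (X Y : Matrix (Fin n) (Fin n) ℂ) (x : Fin n → ℂ),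
      (X - Complex.I • Y) *ᵥ x = X *ᵥ x - Complex.I • (Y *ᵥ x) := fun X Y x => by
    rw [Matrix.sub_mulVec, Matrix.smul_mulVec]
  set L : ((Fin n) → ℂ) →ₗ[ℂ] ((Fin n ⊕ Fin n) → ℂ) :=
    (frame X₂ Y₂).mulVecLin ∘ₗ (A₂⁻¹).mulVecLin with hLdef
  have hLapp : ∀ v, L v = frame X₂ Y₂ *ᵥ (A₂⁻¹ *ᵥ v) := fun v => rfl
  have hLinj : Function.Injective L := by
    apply Function.Injective.comp (LagAux.frame_injective h₂)
    intro a b hab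
    have : A₂ *ᵥ (A₂⁻¹ *ᵥ a) = A₂ *ᵥ (A₂⁻¹ *ᵥ b) := by
      simp only [Matrix.mulVecLin_apply] at hab
      rw [hab]
    rwa [hA₂i', hA₂i'] at this
  have htW : tW X₁ Y₁ X₂ Y₂ = -(A₁ * B₁⁻¹ * (B₂ * A₂⁻¹)) := rfl
  have hmap : Submodule.map L (LinearMap.ker (tW X₁ Y₁ X₂ Y₂ + 1).mulVecLin)
      = frameSpan X₁ Y₁ ⊓ frameSpan X₂ Y₂ := by
    ext z
    simp only [Submodule.mem_map, LinearMap.mem_ker, Submodule.mem_inf,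
      LagAux.frameSpan_eq_range, LinearMap.mem_range, Matrix.mulVecLin_apply]
    constructor
    · rintro ⟨v, hv, rfl⟩
      have hv' : tW X₁ Y₁ X₂ Y₂ *ᵥ v + v = 0 := by
        simpa [Matrix.add_mulVec, Matrix.one_mulVec] using hv
      have hkey : A₁ *ᵥ (B₁⁻¹ *ᵥ (B₂ *ᵥ (A₂⁻¹ *ᵥ v))) = v := by
        have h5 : (A₁ * B₁⁻¹ * (B₂ * A₂⁻¹)) *ᵥ v = v := by
          have := eq_neg_of_add_eq_zero_left hv'
          rw [htW, Matrix.neg_mulVec] at this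
          exact neg_injective this
        simpa only [Matrix.mulVec_mulVec, Matrix.mul_assoc] using h5
      set w := A₂⁻¹ *ᵥ v with hwdef
      set u := B₁⁻¹ *ᵥ (B₂ *ᵥ w) with hudef
      have h1 : A₁ *ᵥ u = A₂ *ᵥ w := by rw [hudef, hkey, hA₂i']
      have h3 : B₁ *ᵥ u = B₂ *ᵥ w := by
        rw [hudef, Matrix.mulVec_mulVec, Matrix.mul_nonsing_inv _ hB₁,
          Matrix.one_mulVec]
      rw [hA₁def, hA₂def, hexpA, hexpA] at h1
      rw [hB₁def, hB₂def, hexpB, hexpB] at h3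
      obtain ⟨hX, hY⟩ := LagAux.pq_eq h1 h3
      refine ⟨⟨u, ?_⟩, ⟨w, rfl⟩⟩
      rw [hLapp, ← hwdef, LagAux.frame_mulVec, LagAux.frame_mulVec, hX, hY]
    · rintro ⟨⟨u, hu⟩, ⟨w, hw⟩⟩
      have huw : Sum.elim (X₁ *ᵥ u) (Y₁ *ᵥ u) = Sum.elim (X₂ *ᵥ w) (Y₂ *ᵥ w) := by
        rw [← LagAux.frame_mulVec, ← LagAux.frame_mulVec, hu, hw]
      have hX : X₁ *ᵥ u = X₂ *ᵥ w := funext fun i => congrFun huw (Sum.inl i)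
      have hY : Y₁ *ᵥ u = Y₂ *ᵥ w := funext fun i => congrFun huw (Sum.inr i)
      have hA : A₁ *ᵥ u = A₂ *ᵥ w := by
        rw [hA₁def, hA₂def, hexpA, hexpA, hX, hY]
      have hB : B₁ *ᵥ u = B₂ *ᵥ w := by
        rw [hB₁def, hB₂def, hexpB, hexpB, hX, hY]
      refine ⟨A₂ *ᵥ w, ?_, ?_⟩
      · have htWv : tW X₁ Y₁ X₂ Y₂ *ᵥ (A₂ *ᵥ w) = -(A₂ *ᵥ w) := by
          rw [htW, Matrix.neg_mulVec]
          congr 1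
          have : (A₁ * B₁⁻¹ * (B₂ * A₂⁻¹)) *ᵥ (A₂ *ᵥ w)
              = A₁ *ᵥ (B₁⁻¹ *ᵥ (B₂ *ᵥ (A₂⁻¹ *ᵥ (A₂ *ᵥ w)))) := by
            simp only [Matrix.mulVec_mulVec, Matrix.mul_assoc]
          rw [this, hA₂i, ← hB, hB₁i, hA]
        rw [Matrix.add_mulVec, Matrix.one_mulVec, htWv]
        simp
      · rw [hLapp, hA₂i, hw]
  rw [← hmap]
  exact (Submodule.equivMapOfInjective L hLinj _).finrank_eq
end
end

section
/- Let 𝐗₂ = (X₂; Y₂) be a frame for a Lagrangian subspace of ℂ^{2n}, let w̃ ∈ ℂ with |w̃| = 1, and set 𝐗₃ = (X₃; Y₃) := i(1 − w̃)𝐗₂ − (1 + w̃)J𝐗₂. Then 𝐗₃*𝐗₃ = (|1 − w̃|² + |1 + w̃|²) 𝐗₂*𝐗₂, 𝐗₃* J 𝐗₃ = 0, and (X₃ − iY₃)(X₃ + iY₃)^{-1} = −(1/w̃)(X₂ − iY₂)(X₂ + iY₂)^{-1}. -/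
open Matrix

noncomputable section

lemma Jmat_mul_frame {n : ℕ} (X Y : Matrix (Fin n) (Fin n) ℂ) :
    Jmat n * frame X Y = frame (-Y) X := by
  ext (i | i) j <;>
    simp [Jmat, frame, Matrix.mul_apply, Matrix.fromBlocks, Matrix.fromRows_apply_inl, Matrix.fromRows_apply_inr,
      Fintype.sum_sum_type, Matrix.one_apply]

lemma frame_smul {n : ℕ} (c : ℂ) (X Y : Matrix (Fin n) (Fin n) ℂ) :
    c • frame X Y = frame (c • X) (c • Y) := by
  ext (i | i) j <;> simp [frame, Matrix.fromRows_apply_inl, Matrix.fromRows_apply_inr]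

lemma frame_sub {n : ℕ} (A B C D : Matrix (Fin n) (Fin n) ℂ) :
    frame A B - frame C D = frame (A - C) (B - D) := by
  ext (i | i) j <;> simp [frame, Matrix.fromRows_apply_inl, Matrix.fromRows_apply_inr]

lemma frame_conjT_mul {n : ℕ} (A B C D : Matrix (Fin n) (Fin n) ℂ) :
    (frame A B)ᴴ * frame C D = Aᴴ * C + Bᴴ * D := by
  rw [frame, frame, conjTranspose_fromRows_eq_fromCols_conjTranspose,
    fromCols_mul_fromRows]

-- orthogonality of frame from Lagrangian condition
lemma lagrangian_orth {n : ℕ} {X Y : Matrix (Fin n) (Fin n) ℂ}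
    (h : IsLagrangianFrame X Y) :
    (frame X Y)ᴴ * (Jmat n * frame X Y) = 0 := by
  have h1 : (Jmat n * frame X Y)ᴴ * frame X Y = 0 := by
    ext j k
    have hcol : ∀ j : Fin n, (frame X Y)ᵀ j ∈ frameSpan X Y :=
      fun j => Submodule.subset_span (Set.mem_range_self j)
    have := h.2 _ (hcol j) _ (hcol k)
    simpa [Matrix.mul_apply, Matrix.conjTranspose_apply, dotProduct,
      Matrix.mulVec, Matrix.transpose_apply, mul_comm] using this
  calc (frame X Y)ᴴ * (Jmat n * frame X Y)
      = ((Jmat n * frame X Y)ᴴ * frame X Y)ᴴ := by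
        rw [conjTranspose_mul, conjTranspose_conjTranspose]
    _ = 0 := by rw [h1]; simp

lemma lagrangian_comm {n : ℕ} {X Y : Matrix (Fin n) (Fin n) ℂ}
    (h : IsLagrangianFrame X Y) : Xᴴ * Y = Yᴴ * X := by
  have := lagrangian_orth h
  rw [Jmat_mul_frame, frame_conjT_mul] at this
  have h2 : -(Xᴴ * Y) + Yᴴ * X = 0 := by simpa using this
  linear_combination (norm := noncomm_ring) -h2

lemma lagrangian_mulVec_inj {n : ℕ} {X Y : Matrix (Fin n) (Fin n) ℂ}
    (h : IsLagrangianFrame X Y) (v : Fin n → ℂ) (hv : frame X Y *ᵥ v = 0) : v = 0 := by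
  have hli : LinearIndependent ℂ (frame X Y)ᵀ := by
    rw [linearIndependent_iff_card_eq_finrank_span (b := (frame X Y)ᵀ)]
    simp only [Fintype.card_fin, Set.finrank]; exact h.1.symm
  have := Fintype.linearIndependent_iff.mp hli v ?_
  · funext j; exact this j
  · funext i
    have := congrFun hv i
    simpa [Matrix.mulVec, dotProduct, mul_comm] using this

lemma lagrangian_det_ne {n : ℕ} {X Y : Matrix (Fin n) (Fin n) ℂ}
    (h : IsLagrangianFrame X Y) : IsUnit (X + Complex.I • Y).det := by
  have hMM : (X + Complex.I • Y)ᴴ * (X + Complex.I • Y) = Xᴴ * X + Yᴴ * Y := by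
    have hc := lagrangian_comm h
    simp only [conjTranspose_add, conjTranspose_smul, add_mul, mul_add,
      smul_mul_assoc, mul_smul_comm, smul_smul, Complex.star_def, Complex.conj_I]
    rw [hc]
    match_scalars <;> simp [Complex.ext_iff]
  rw [isUnit_iff_ne_zero]
  intro h0
  obtain ⟨v, hv0, hv⟩ := (Matrix.exists_mulVec_eq_zero_iff).mpr h0
  apply hv0
  apply lagrangian_mulVec_inj h
  have hz : ((frame X Y)ᴴ * frame X Y) *ᵥ v = 0 := by
    rw [frame_conjT_mul, ← hMM, ← Matrix.mulVec_mulVec, hv, Matrix.mulVec_zero]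
  have : star (frame X Y *ᵥ v) ⬝ᵥ (frame X Y *ᵥ v) = 0 := by
    rw [Matrix.star_mulVec, Matrix.dotProduct_mulVec, Matrix.vecMul_vecMul,
      ← Matrix.dotProduct_mulVec, hz]
    simp
  open ComplexOrder in
  exact dotProduct_star_self_eq_zero.mp this

/-- Let `𝐗₂ = (X₂; Y₂)` be a frame for a Lagrangian subspace of `ℂ^{2n}`,
`|w̃| = 1`, and `𝐗₃ = (X₃; Y₃) := i(1 − w̃)𝐗₂ − (1 + w̃)J𝐗₂`. Then
`𝐗₃*𝐗₃ = (|1 − w̃|² + |1 + w̃|²)𝐗₂*𝐗₂`, `𝐗₃* J 𝐗₃ = 0`, and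
`(X₃ − iY₃)(X₃ + iY₃)⁻¹ = −(1/w̃)(X₂ − iY₂)(X₂ + iY₂)⁻¹`. -/
theorem rotated_frame_identities {n : ℕ} (X₂ Y₂ X₃ Y₃ : Matrix (Fin n) (Fin n) ℂ)
    (h₂ : IsLagrangianFrame X₂ Y₂) (w : ℂ) (hw : ‖w‖ = 1)
    (h₃ : frame X₃ Y₃ =
      (Complex.I * (1 - w)) • frame X₂ Y₂ - (1 + w) • (Jmat n * frame X₂ Y₂)) :
    (frame X₃ Y₃)ᴴ * frame X₃ Y₃ =
      ((‖1 - w‖ ^ 2 + ‖1 + w‖ ^ 2 : ℝ) : ℂ) •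
        ((frame X₂ Y₂)ᴴ * frame X₂ Y₂) ∧
    (frame X₃ Y₃)ᴴ * (Jmat n * frame X₃ Y₃) = 0 ∧
    (X₃ - Complex.I • Y₃) * (X₃ + Complex.I • Y₃)⁻¹ =
      (-w⁻¹) • ((X₂ - Complex.I • Y₂) * (X₂ + Complex.I • Y₂)⁻¹) := by
  have hww : (starRingEnd ℂ) w * w = 1 := by
    rw [← Complex.normSq_eq_conj_mul_self, Complex.normSq_eq_norm_sq, hw]; norm_num
  have hw0 : w ≠ 0 := by
    intro h; rw [h] at hw; simp at hw
  have hconj : (starRingEnd ℂ) w = w⁻¹ := by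
    field_simp; linear_combination hww
  -- extract block equations
  rw [Jmat_mul_frame, frame_smul, frame_smul, frame_sub] at h₃
  obtain ⟨hX3, hY3⟩ := (Matrix.fromRows_inj.eq_iff).mp h₃
  have hcomm := lagrangian_comm h₂
  -- part 1
  have part1 : (frame X₃ Y₃)ᴴ * frame X₃ Y₃ =
      ((‖1 - w‖ ^ 2 + ‖1 + w‖ ^ 2 : ℝ) : ℂ) •
        ((frame X₂ Y₂)ᴴ * frame X₂ Y₂) := by
    rw [frame_conjT_mul, frame_conjT_mul, hX3, hY3]
    have hcast : ((‖1 - w‖ ^ 2 + ‖1 + w‖ ^ 2 : ℝ) : ℂ)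
        = (starRingEnd ℂ) (1 - w) * (1 - w) + (starRingEnd ℂ) (1 + w) * (1 + w) := by
      rw [← Complex.normSq_eq_conj_mul_self, ← Complex.normSq_eq_conj_mul_self]
      push_cast [Complex.normSq_eq_norm_sq]; ring
    rw [hcast]
    simp only [conjTranspose_add, conjTranspose_sub, conjTranspose_smul, conjTranspose_neg,
      add_mul, sub_mul, mul_add, mul_sub, smul_mul_assoc, mul_smul_comm, smul_smul,
      Matrix.neg_mul, Matrix.mul_neg, smul_neg, neg_neg, neg_smul, Complex.star_def,
      _root_.map_mul, Complex.conj_I, map_sub, map_add, _root_.map_one]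
    simp only [hcomm]
    match_scalars <;>
      · simp only [_root_.map_mul, _root_.map_one, Complex.conj_I, hconj]
        field_simp
        ring_nf
        try simp only [Complex.I_sq]
        try ring_nf
        try norm_num
  refine ⟨part1, ?_, ?_⟩
  -- part 2
  · rw [Jmat_mul_frame, frame_conjT_mul, hX3, hY3]
    simp only [conjTranspose_add, conjTranspose_sub, conjTranspose_smul, conjTranspose_neg,
      add_mul, sub_mul, mul_add, mul_sub, smul_mul_assoc, mul_smul_comm, smul_smul,
      Matrix.neg_mul, Matrix.mul_neg, smul_neg, neg_neg, neg_smul, Complex.star_def,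
      _root_.map_mul, Complex.conj_I, map_sub, map_add, _root_.map_one]
    simp only [hcomm]
    match_scalars <;>
      · simp only [_root_.map_mul, _root_.map_one, Complex.conj_I, hconj]
        field_simp
        ring_nf
        try simp only [Complex.I_sq]
        try ring_nf
        try norm_num
  -- part 3
  · have hdet : IsUnit (X₂ + Complex.I • Y₂).det := lagrangian_det_ne h₂
    have hsum : X₃ + Complex.I • Y₃ = (-(2 * Complex.I * w)) • (X₂ + Complex.I • Y₂) := by
      rw [hX3, hY3]
      match_scalars <;>
        · ring_nf
          try simp only [Complex.I_sq]
          try ring_nf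
          try norm_num
    have hdiff : X₃ - Complex.I • Y₃ = (2 * Complex.I) • (X₂ - Complex.I • Y₂) := by
      rw [hX3, hY3]
      match_scalars <;>
        · ring_nf
          try simp only [Complex.I_sq]
          try ring_nf
          try norm_num
    have hc0 : (-(2 * Complex.I * w)) ≠ 0 := by
      simp [Complex.I_ne_zero, hw0]
    have hinv : (X₃ + Complex.I • Y₃)⁻¹ = (-(2 * Complex.I * w))⁻¹ • (X₂ + Complex.I • Y₂)⁻¹ := by
      rw [hsum]
      apply Matrix.inv_eq_left_inv
      rw [smul_mul_assoc, Matrix.mul_smul, smul_smul, inv_mul_cancel₀ hc0, one_smul,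
        Matrix.nonsing_inv_mul _ hdet]
    rw [hdiff, hinv, smul_mul_assoc, Matrix.mul_smul, smul_smul]
    congr 1
    field_simp [Complex.I_ne_zero]
end
end

section
/- Let W : (a,b) → ℂ^{n×n} be a path of unitary matrices that is differentiable at t₀ ∈ (a,b) and continuous near t₀, define Ω(t₀) := −i W(t₀)^{-1} W'(t₀) (so that W'(t₀) = i W(t₀) Ω(t₀)), and let θ ∈ ℝ be such that e^{iθ} is not an eigenvalue of W(t₀). Then the path A(t) := i(e^{iθ}I − W(t))^{-1}(e^{iθ}I + W(t)), defined for t near t₀, is differentiable at t₀ with A'(t₀) = 2 ((e^{iθ}I − W(t₀))^{-1})* Ω(t₀) (e^{iθ}I − W(t₀))^{-1}. -/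
open Matrix

noncomputable section

open Filter Topology in
/-- Entrywise differentiability of the inverse of a matrix path. -/
lemma aux_inv_entry_hasDerivAt {n : ℕ} (t₀ : ℝ) (M : ℝ → Matrix (Fin n) (Fin n) ℂ)
    (M' : Matrix (Fin n) (Fin n) ℂ)
    (hc : ContinuousAt M t₀)
    (hd : ∀ i j, HasDerivAt (fun t => M t i j) (M' i j) t₀)
    (hu : IsUnit (M t₀)) (i j : Fin n) :
    HasDerivAt (fun t => (M t)⁻¹ i j) ((-((M t₀)⁻¹ * M' * (M t₀)⁻¹)) i j) t₀ := by
  have hdet0 : (M t₀).det ≠ 0 := by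
    have := (Matrix.isUnit_iff_isUnit_det (M t₀)).1 hu
    exact isUnit_iff_ne_zero.1 this
  have hdetc : ContinuousAt (fun t => (M t).det) t₀ :=
    (Continuous.matrix_det continuous_id).continuousAt.comp hc
  have hev : ∀ᶠ t in 𝓝 t₀, IsUnit (M t).det := by
    filter_upwards [hdetc.eventually_ne hdet0] with t ht
    exact isUnit_iff_ne_zero.2 ht
  have hinvc : ContinuousAt (fun t => (M t)⁻¹) t₀ := by
    refine (continuousAt_matrix_inv (M t₀) ?_).comp hc
    rw [Ring.inverse_eq_inv']
    exact continuousAt_inv₀ hdet0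
  have h2 : ∀ p q : Fin n, Tendsto (fun t => (M t)⁻¹ p q) (𝓝[≠] t₀) (𝓝 ((M t₀)⁻¹ p q)) := by
    intro p q
    have : ContinuousAt (fun t => (M t)⁻¹ p q) t₀ :=
      ((continuous_id.matrix_elem p q).continuousAt).comp hinvc
    exact this.tendsto.mono_left nhdsWithin_le_nhds
  have h1 : ∀ k l : Fin n,
      Tendsto (fun t => ((t - t₀)⁻¹ • (M t₀ - M t)) k l) (𝓝[≠] t₀) (𝓝 (-(M' k l))) := by
    intro k l
    have := (hasDerivAt_iff_tendsto_slope.1 (hd k l)).neg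
    refine this.congr fun t => ?_
    simp [slope_def_module, Matrix.smul_apply, Matrix.sub_apply, smul_sub, neg_sub]
  have hlim : Tendsto
      (fun t => ((M t)⁻¹ * ((t - t₀)⁻¹ • (M t₀ - M t)) * (M t₀)⁻¹) i j) (𝓝[≠] t₀)
      (𝓝 ((-((M t₀)⁻¹ * M' * (M t₀)⁻¹)) i j)) := by
    have key : Tendsto
        (fun t => ((M t)⁻¹ * ((t - t₀)⁻¹ • (M t₀ - M t)) * (M t₀)⁻¹) i j) (𝓝[≠] t₀)
        (𝓝 (∑ l, (∑ k, (M t₀)⁻¹ i k * (-(M' k l))) * (M t₀)⁻¹ l j)) := by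
      simp only [Matrix.mul_apply, Finset.sum_mul]
      refine tendsto_finset_sum _ fun l _ => tendsto_finset_sum _ fun k _ => ?_
      exact ((h2 i k).mul (h1 k l)).mul tendsto_const_nhds
    convert key using 2
    have : -((M t₀)⁻¹ * M' * (M t₀)⁻¹) = (M t₀)⁻¹ * (-M') * (M t₀)⁻¹ := by
      simp [Matrix.mul_neg, Matrix.neg_mul]
    rw [this]
    simp [Matrix.mul_apply, Finset.sum_mul]
  rw [hasDerivAt_iff_tendsto_slope]
  refine hlim.congr' ?_
  have hev' : ∀ᶠ t in 𝓝[≠] t₀, IsUnit (M t).det := nhdsWithin_le_nhds hev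
  filter_upwards [hev'] with t ht
  have hid : (M t)⁻¹ - (M t₀)⁻¹ = (M t)⁻¹ * (M t₀ - M t) * (M t₀)⁻¹ := by
    rw [mul_sub, Matrix.nonsing_inv_mul _ ht, sub_mul, one_mul, mul_assoc,
      Matrix.mul_nonsing_inv _ ((Matrix.isUnit_iff_isUnit_det (M t₀)).1 hu), mul_one]
  have : (M t)⁻¹ * ((t - t₀)⁻¹ • (M t₀ - M t)) * (M t₀)⁻¹
      = (t - t₀)⁻¹ • ((M t)⁻¹ - (M t₀)⁻¹) := by
    rw [Matrix.mul_smul, Matrix.smul_mul, hid]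
  rw [this]
  simp [slope_def_module, Matrix.smul_apply, Matrix.sub_apply]

open Filter Topology in
theorem cayley_hasDerivAt {n : ℕ} (a b t₀ : ℝ) (ht₀ : t₀ ∈ Set.Ioo a b)
    (W : ℝ → Matrix (Fin n) (Fin n) ℂ) (W' : Matrix (Fin n) (Fin n) ℂ)
    (hWu : ∀ t ∈ Set.Ioo a b, W t ∈ Matrix.unitaryGroup (Fin n) ℂ)
    (hWc : ∀ i j, ContinuousAt (fun t => W t i j) t₀)
    (hWd : ∀ i j, HasDerivAt (fun t => W t i j) (W' i j) t₀)
    (θ : ℝ) (hθ : Complex.exp (θ * Complex.I) ∉ spectrum ℂ (W t₀)) :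
    ∀ i j, HasDerivAt
      (fun t => (Complex.I •
        ((Complex.exp (θ * Complex.I) • (1 : Matrix (Fin n) (Fin n) ℂ) - W t)⁻¹ *
          (Complex.exp (θ * Complex.I) • (1 : Matrix (Fin n) (Fin n) ℂ) + W t))) i j)
      (((2 : ℂ) •
        (((Complex.exp (θ * Complex.I) • (1 : Matrix (Fin n) (Fin n) ℂ) - W t₀)⁻¹)ᴴ *
          ((-Complex.I) • ((W t₀)⁻¹ * W')) *
          (Complex.exp (θ * Complex.I) • (1 : Matrix (Fin n) (Fin n) ℂ) - W t₀)⁻¹)) i j) t₀ := by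
  intro i j
  set E : ℂ := Complex.exp (θ * Complex.I) with hEdef
  set M : ℝ → Matrix (Fin n) (Fin n) ℂ := fun t => E • 1 - W t with hMdef
  have hE : E ≠ 0 := Complex.exp_ne_zero _
  have hEconj : (starRingEnd ℂ) E = E⁻¹ := by
    rw [hEdef, ← Complex.exp_conj, _root_.map_mul, Complex.conj_ofReal, Complex.conj_I,
      mul_neg, Complex.exp_neg]
  -- unitarity of W t₀
  have hWmem := hWu t₀ ht₀
  have hWW : W t₀ * (W t₀)ᴴ = 1 := by
    have := (Matrix.mem_unitaryGroup_iff).1 hWmem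
    simpa [Matrix.star_eq_conjTranspose] using this
  -- M t₀ is a unit
  have hunit : IsUnit (M t₀) := by
    rw [spectrum.notMem_iff] at hθ
    simpa [hMdef, Algebra.algebraMap_eq_smul_one] using hθ
  have hdetu : IsUnit (M t₀).det := (Matrix.isUnit_iff_isUnit_det (M t₀)).1 hunit
  have hdet0 : (M t₀).det ≠ 0 := isUnit_iff_ne_zero.1 hdetu
  -- continuity of M
  have hc : ContinuousAt M t₀ := by
    refine continuousAt_pi.2 ?_
    intro p
    rw [continuousAt_pi]
    intro q
    have : (fun t => M t p q) = fun t => (E • (1 : Matrix (Fin n) (Fin n) ℂ)) p q - W t p q := by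
      funext t; simp [hMdef, Matrix.sub_apply]
    rw [this]
    exact continuousAt_const.sub (hWc p q)
  -- entrywise derivative of M
  have hd : ∀ p q, HasDerivAt (fun t => M t p q) ((-W') p q) t₀ := by
    intro p q
    have : (fun t => M t p q) = fun t => (E • (1 : Matrix (Fin n) (Fin n) ℂ)) p q - W t p q := by
      funext t; simp [hMdef, Matrix.sub_apply]
    rw [this]
    exact ((hasDerivAt_const t₀ _).sub (hWd p q)).congr_deriv (by simp [Matrix.neg_apply])
  -- derivative of entries of the inverse
  have hinv : HasDerivAt (fun t => (M t)⁻¹ i j) (((M t₀)⁻¹ * W' * (M t₀)⁻¹) i j) t₀ := by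
    have h := aux_inv_entry_hasDerivAt t₀ M (-W') hc hd hunit i j
    have he : -((M t₀)⁻¹ * (-W') * (M t₀)⁻¹) = (M t₀)⁻¹ * W' * (M t₀)⁻¹ := by
      simp [Matrix.mul_neg, Matrix.neg_mul]
    rwa [he] at h
  -- eventually, M t is a unit
  have hdetc : ContinuousAt (fun t => (M t).det) t₀ :=
    (Continuous.matrix_det continuous_id).continuousAt.comp hc
  have hev : ∀ᶠ t in 𝓝 t₀, IsUnit (M t).det := by
    filter_upwards [hdetc.eventually_ne hdet0] with t ht
    exact isUnit_iff_ne_zero.2 ht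
  -- the target function eventually agrees with a simpler one
  have heq : ∀ᶠ t in 𝓝 t₀,
      Complex.I * ((2 * E) * (M t)⁻¹ i j - (1 : Matrix (Fin n) (Fin n) ℂ) i j)
      = (Complex.I • ((M t)⁻¹ * (E • (1 : Matrix (Fin n) (Fin n) ℂ) + W t))) i j := by
    filter_upwards [hev] with t ht
    have h1 : E • (1 : Matrix (Fin n) (Fin n) ℂ) + W t = (2 * E) • 1 - M t := by
      simp only [hMdef]
      rw [two_mul, add_smul]
      abel
    have h2 : (M t)⁻¹ * (E • (1 : Matrix (Fin n) (Fin n) ℂ) + W t)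
        = (2 * E) • (M t)⁻¹ - 1 := by
      rw [h1, mul_sub, Matrix.mul_smul, mul_one, Matrix.nonsing_inv_mul _ ht]
    rw [h2]
    simp [Matrix.smul_apply, Matrix.sub_apply, smul_eq_mul, mul_sub]
  -- derivative of the simpler function
  have hder : HasDerivAt
      (fun t => Complex.I * ((2 * E) * (M t)⁻¹ i j - (1 : Matrix (Fin n) (Fin n) ℂ) i j))
      (Complex.I * ((2 * E) * (((M t₀)⁻¹ * W' * (M t₀)⁻¹) i j))) t₀ := by
    have := ((hinv.const_mul (2 * E)).sub_const ((1 : Matrix (Fin n) (Fin n) ℂ) i j)).const_mul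
      Complex.I
    simpa using this
  -- key matrix identity
  have hWMH : W t₀ * (M t₀)ᴴ = -(E⁻¹ • M t₀) := by
    rw [hMdef]
    have hEstar : star E = E⁻¹ := hEconj
    simp only [Matrix.conjTranspose_sub, Matrix.conjTranspose_smul, Matrix.conjTranspose_one,
      hEstar]
    rw [mul_sub, Matrix.mul_smul, mul_one, hWW, smul_sub, smul_smul,
      inv_mul_cancel₀ hE, one_smul, neg_sub]
  have hkey : ((M t₀)⁻¹)ᴴ * (W t₀)⁻¹ = -(E • (M t₀)⁻¹) := by
    have h3 : (W t₀ * (M t₀)ᴴ)⁻¹ = -(E • (M t₀)⁻¹) := by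
      apply Matrix.inv_eq_right_inv
      rw [hWMH, Matrix.neg_mul, Matrix.mul_neg, neg_neg, Matrix.smul_mul, Matrix.mul_smul,
        smul_smul, inv_mul_cancel₀ hE, Matrix.mul_nonsing_inv _ hdetu, one_smul]
    rw [← h3, Matrix.mul_inv_rev, Matrix.conjTranspose_nonsing_inv]
  -- match derivatives
  have hfinal : Complex.I * ((2 * E) * (((M t₀)⁻¹ * W' * (M t₀)⁻¹) i j))
      = ((2 : ℂ) • (((M t₀)⁻¹)ᴴ * ((-Complex.I) • ((W t₀)⁻¹ * W')) * (M t₀)⁻¹)) i j := by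
    have hmat : (2 : ℂ) • (((M t₀)⁻¹)ᴴ * ((-Complex.I) • ((W t₀)⁻¹ * W')) * (M t₀)⁻¹)
        = (Complex.I * (2 * E)) • ((M t₀)⁻¹ * W' * (M t₀)⁻¹) := by
      rw [Matrix.mul_smul, Matrix.smul_mul, smul_smul, ← mul_assoc (((M t₀)⁻¹)ᴴ), hkey,
        Matrix.neg_mul, Matrix.neg_mul, Matrix.smul_mul, Matrix.smul_mul, smul_neg, smul_smul,
        ← neg_smul]
      congr 1
      ring
    rw [hmat]
    simp only [Matrix.smul_apply, smul_eq_mul]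
    ring
  rw [hfinal] at hder
  exact hder.congr_of_eventuallyEq (heq.mono fun t ht => ht.symm)
end
end

section
/- Let W : (a,b) → ℂ^{n×n} be a path of unitary matrices differentiable at t₀ with W'(t₀) = i W(t₀) Ω(t₀) where Ω(t₀) := −i W(t₀)^{-1} W'(t₀), let θ ∈ ℝ with e^{iθ} not an eigenvalue of W(t₀), and set A(t) := i(e^{iθ}I − W(t))^{-1}(e^{iθ}I + W(t)) for t near t₀. If w₀ is an eigenvalue of W(t₀) and P₀ denotes the orthogonal projection onto the eigenspace ker(W(t₀) − w₀ I), then P₀ A'(t₀) P₀ = (2/|e^{iθ} − w₀|²) P₀ Ω(t₀) P₀. -/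
open Matrix

noncomputable section

/-- With `W` a path of unitary matrices differentiable at `t₀`
(`W'(t₀) = i W(t₀) Ω` with `Ω := −i W(t₀)⁻¹ W'(t₀)`), `e^{iθ}` not an eigenvalue of `W(t₀)`,
and `A(t) := i(e^{iθ}I − W(t))⁻¹(e^{iθ}I + W(t))` (with derivative `A'` at `t₀`): if `w₀` is
an eigenvalue of `W(t₀)` and `P₀` is the orthogonal projection onto `ker(W(t₀) − w₀I)`, then
`P₀ A'(t₀) P₀ = (2/|e^{iθ} − w₀|²) P₀ Ω P₀`. -/
theorem projected_derivative {n : ℕ} (a b t₀ : ℝ) (ht₀ : t₀ ∈ Set.Ioo a b)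
    (W : ℝ → Matrix (Fin n) (Fin n) ℂ) (W' A' : Matrix (Fin n) (Fin n) ℂ)
    (hWu : ∀ t ∈ Set.Ioo a b, W t ∈ Matrix.unitaryGroup (Fin n) ℂ)
    (hWc : ∀ i j, ContinuousAt (fun t => W t i j) t₀)
    (hWd : ∀ i j, HasDerivAt (fun t => W t i j) (W' i j) t₀)
    (θ : ℝ) (hθ : Complex.exp (θ * Complex.I) ∉ spectrum ℂ (W t₀))
    (hAd : ∀ i j, HasDerivAt
      (fun t => (Complex.I •
        ((Complex.exp (θ * Complex.I) • (1 : Matrix (Fin n) (Fin n) ℂ) - W t)⁻¹ *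
          (Complex.exp (θ * Complex.I) • (1 : Matrix (Fin n) (Fin n) ℂ) + W t))) i j)
      (A' i j) t₀)
    (w₀ : ℂ) (hw₀ : w₀ ∈ spectrum ℂ (W t₀))
    (P₀ : Matrix (Fin n) (Fin n) ℂ)
    (hP₀herm : P₀.IsHermitian) (hP₀idem : P₀ * P₀ = P₀)
    (hP₀ran : W t₀ * P₀ = w₀ • P₀)
    (hP₀fix : ∀ v : Fin n → ℂ, W t₀ *ᵥ v = w₀ • v → P₀ *ᵥ v = v) :
    P₀ * A' * P₀ =
      (((2 / ‖Complex.exp (θ * Complex.I) - w₀‖ ^ 2 : ℝ)) : ℂ) •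
        (P₀ * ((-Complex.I) • ((W t₀)⁻¹ * W')) * P₀) := by
  set z : ℂ := Complex.exp (θ * Complex.I) with hz
  set B : ℝ → Matrix (Fin n) (Fin n) ℂ := fun t => z • 1 - W t with hB
  set A : ℝ → Matrix (Fin n) (Fin n) ℂ := fun t => Complex.I • ((B t)⁻¹ * (z • 1 + W t)) with hA
  -- invertibility at t₀
  have hBunit : IsUnit (B t₀) := by
    have h := spectrum.notMem_iff.mp hθ
    rwa [Algebra.algebraMap_eq_smul_one] at h
  have hBdet : IsUnit (B t₀).det := (Matrix.isUnit_iff_isUnit_det _).mp hBunit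
  -- continuity and eventual invertibility
  have hWcont : ContinuousAt (fun t => W t) t₀ :=
    continuousAt_pi.2 fun i => continuousAt_pi.2 fun j => hWc i j
  have hBcont : ContinuousAt B t₀ := continuousAt_const.sub hWcont
  have hdetcont : ContinuousAt (fun t => (B t).det) t₀ :=
    ((Continuous.matrix_det continuous_id).continuousAt).comp hBcont
  have hdetne : (B t₀).det ≠ 0 := hBdet.ne_zero
  have hev : ∀ᶠ t in nhds t₀, IsUnit (B t).det :=
    (hdetcont.eventually_ne hdetne).mono fun t ht => isUnit_iff_ne_zero.mpr ht
  have hevEq : (fun t => B t * A t) =ᶠ[nhds t₀] fun t => Complex.I • (z • 1 + W t) := by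
    refine hev.mono fun t ht => ?_
    show B t * (Complex.I • ((B t)⁻¹ * (z • 1 + W t))) = _
    rw [mul_smul_comm, ← mul_assoc, Matrix.mul_nonsing_inv _ ht, one_mul]
  -- entrywise derivatives
  have hBd : ∀ i k, HasDerivAt (fun t => B t i k) (-W' i k) t₀ := by
    intro i k
    have h := (hasDerivAt_const t₀ ((z • (1 : Matrix (Fin n) (Fin n) ℂ)) i k)).fun_sub (hWd i k)
    rw [zero_sub] at h; exact h
  have hprod : ∀ i j, HasDerivAt (fun t => (B t * A t) i j)
      (((-W') * A t₀ + B t₀ * A') i j) t₀ := by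
    intro i j
    have h : HasDerivAt (fun t => ∑ k, B t i k * A t k j)
        (∑ k, ((-W' i k) * A t₀ k j + B t₀ i k * A' k j)) t₀ :=
      HasDerivAt.fun_sum fun k _ => (hBd i k).mul (hAd k j)
    simpa [Matrix.mul_apply, Matrix.add_apply, Matrix.neg_apply,
      Finset.sum_add_distrib] using h
  have hRd : ∀ i j, HasDerivAt (fun t => (Complex.I • (z • 1 + W t)) i j)
      ((Complex.I • W') i j) t₀ := by
    intro i j
    have h := (((hasDerivAt_const t₀ ((z • (1 : Matrix (Fin n) (Fin n) ℂ)) i j)).add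
      (hWd i j)).const_mul Complex.I)
    simpa [Matrix.smul_apply, Matrix.add_apply, smul_eq_mul] using h
  have key : (-W') * A t₀ + B t₀ * A' = Complex.I • W' := by
    ext i j
    have heq : (fun t => (B t * A t) i j) =ᶠ[nhds t₀]
        (fun t => (Complex.I • (z • 1 + W t)) i j) :=
      hevEq.mono fun t ht => congrArg (fun M : Matrix (Fin n) (Fin n) ℂ => M i j) ht
    exact (heq.hasDerivAt_iff.mp (hprod i j)).unique (hRd i j)
  have key2 : B t₀ * A' = Complex.I • W' + W' * A t₀ := by
    rw [← key, neg_mul]; abel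
  have hA'eq : A' = (B t₀)⁻¹ * (Complex.I • W' + W' * A t₀) := by
    have h : (B t₀)⁻¹ * (B t₀ * A') = A' := by
      rw [← mul_assoc, Matrix.nonsing_inv_mul _ hBdet, one_mul]
    rw [key2] at h
    exact h.symm
  -- eigenvalue facts
  have hzw : z ≠ w₀ := fun h => hθ (h ▸ hw₀)
  have hzw0 : z - w₀ ≠ 0 := sub_ne_zero.mpr hzw
  obtain ⟨v, hv0, hv⟩ : ∃ v, v ≠ 0 ∧ (w₀ • 1 - W t₀) *ᵥ v = 0 := by
    rw [Matrix.exists_mulVec_eq_zero_iff]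
    have h := spectrum.mem_iff.mp hw₀
    rw [Algebra.algebraMap_eq_smul_one] at h
    by_contra hne
    exact h ((Matrix.isUnit_iff_isUnit_det _).mpr (isUnit_iff_ne_zero.mpr hne))
  have hveig : W t₀ *ᵥ v = w₀ • v := by
    rw [Matrix.sub_mulVec, sub_eq_zero] at hv
    rw [← hv, Matrix.smul_mulVec, Matrix.one_mulVec]
  have hU : (W t₀)ᴴ * W t₀ = 1 := by
    have h := (Matrix.mem_unitaryGroup_iff'.mp (hWu t₀ ht₀))
    rwa [Matrix.star_eq_conjTranspose] at h
  have hq : star v ⬝ᵥ v ≠ 0 := by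
    intro h
    apply hv0
    have hsum : star v ⬝ᵥ v = ((∑ i, Complex.normSq (v i) : ℝ) : ℂ) := by
      rw [dotProduct]
      push_cast
      refine Finset.sum_congr rfl fun i _ => ?_
      rw [Pi.star_apply, Complex.normSq_eq_conj_mul_self, starRingEnd_apply]
    rw [hsum] at h
    have h2 : (∑ i, Complex.normSq (v i)) = 0 := by exact_mod_cast h
    have h3 : ∀ i ∈ Finset.univ, Complex.normSq (v i) = 0 :=
      (Finset.sum_eq_zero_iff_of_nonneg fun i _ => Complex.normSq_nonneg _).mp h2
    funext i
    exact Complex.normSq_eq_zero.mp (h3 i (Finset.mem_univ i))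
  have hw₀conj : w₀ * (starRingEnd ℂ) w₀ = 1 := by
    have h1 : star (W t₀ *ᵥ v) ⬝ᵥ (W t₀ *ᵥ v) = star v ⬝ᵥ v := by
      rw [Matrix.star_mulVec, ← Matrix.dotProduct_mulVec, Matrix.mulVec_mulVec, hU,
        Matrix.one_mulVec]
    rw [hveig, star_smul, smul_dotProduct, dotProduct_smul,
      smul_eq_mul, smul_eq_mul, ← mul_assoc, ← starRingEnd_apply] at h1
    refine mul_right_cancel₀ hq ?_
    rw [one_mul]
    linear_combination h1
  have hw₀ne : w₀ ≠ 0 := left_ne_zero_of_mul_eq_one hw₀conj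
  -- projection facts
  have hPW : P₀ * (W t₀)ᴴ = (starRingEnd ℂ) w₀ • P₀ := by
    have h := congrArg Matrix.conjTranspose hP₀ran
    rwa [Matrix.conjTranspose_mul, Matrix.conjTranspose_smul, hP₀herm.eq] at h
  have hPW₀ : P₀ * W t₀ = w₀ • P₀ := by
    have h : P₀ = (starRingEnd ℂ) w₀ • (P₀ * W t₀) := by
      have h0 : P₀ * (W t₀)ᴴ * W t₀ = (starRingEnd ℂ) w₀ • (P₀ * W t₀) := by
        rw [hPW, Matrix.smul_mul]
      rw [mul_assoc, hU, mul_one] at h0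
      exact h0
    calc P₀ * W t₀ = (w₀ * (starRingEnd ℂ) w₀) • (P₀ * W t₀) := by rw [hw₀conj, one_smul]
      _ = w₀ • ((starRingEnd ℂ) w₀ • (P₀ * W t₀)) := mul_smul _ _ _
      _ = w₀ • P₀ := by rw [← h]
  have hWinv : (W t₀)⁻¹ = (W t₀)ᴴ := Matrix.inv_eq_left_inv hU
  have hPWinv : P₀ * (W t₀)⁻¹ = (starRingEnd ℂ) w₀ • P₀ := by rw [hWinv]; exact hPW
  have hBP : B t₀ * P₀ = (z - w₀) • P₀ := by
    show (z • 1 - W t₀) * P₀ = _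
    rw [Matrix.sub_mul, Matrix.smul_mul, one_mul, hP₀ran, sub_smul]
  have hPB : P₀ * B t₀ = (z - w₀) • P₀ := by
    show P₀ * (z • 1 - W t₀) = _
    rw [Matrix.mul_sub, Matrix.mul_smul, mul_one, hPW₀, sub_smul]
  have hBiP : (B t₀)⁻¹ * P₀ = (z - w₀)⁻¹ • P₀ := by
    have h2 : (B t₀)⁻¹ * (B t₀ * P₀) = P₀ := by
      rw [← mul_assoc, Matrix.nonsing_inv_mul _ hBdet, one_mul]
    rw [hBP, Matrix.mul_smul] at h2
    calc (B t₀)⁻¹ * P₀ = (z - w₀)⁻¹ • ((z - w₀) • ((B t₀)⁻¹ * P₀)) :=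
          (inv_smul_smul₀ hzw0 _).symm
      _ = (z - w₀)⁻¹ • P₀ := by rw [h2]
  have hPBi : P₀ * (B t₀)⁻¹ = (z - w₀)⁻¹ • P₀ := by
    have h2 : (P₀ * B t₀) * (B t₀)⁻¹ = P₀ := by
      rw [mul_assoc, Matrix.mul_nonsing_inv _ hBdet, mul_one]
    rw [hPB, Matrix.smul_mul] at h2
    calc P₀ * (B t₀)⁻¹ = (z - w₀)⁻¹ • ((z - w₀) • (P₀ * (B t₀)⁻¹)) :=
          (inv_smul_smul₀ hzw0 _).symm
      _ = (z - w₀)⁻¹ • P₀ := by rw [h2]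
  -- compute A t₀ * P₀
  have hAP : A t₀ * P₀ = (Complex.I * ((z + w₀) * (z - w₀)⁻¹)) • P₀ := by
    have h1 : (z • 1 + W t₀) * P₀ = (z + w₀) • P₀ := by
      rw [Matrix.add_mul, Matrix.smul_mul, one_mul, hP₀ran, add_smul]
    show Complex.I • ((B t₀)⁻¹ * (z • 1 + W t₀)) * P₀ = _
    rw [Matrix.smul_mul, mul_assoc, h1, Matrix.mul_smul, hBiP, smul_smul, smul_smul]
    congr 1
    ring
  -- main LHS computation
  have hstep : (Complex.I • W' + W' * A t₀) * P₀
      = (Complex.I + Complex.I * ((z + w₀) * (z - w₀)⁻¹)) • (W' * P₀) := by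
    rw [Matrix.add_mul, Matrix.smul_mul, mul_assoc, hAP, Matrix.mul_smul, add_smul]
  have hLHS : P₀ * A' * P₀ =
      ((Complex.I + Complex.I * ((z + w₀) * (z - w₀)⁻¹)) * (z - w₀)⁻¹) • (P₀ * W' * P₀) := by
    rw [hA'eq, mul_assoc, mul_assoc, hstep, Matrix.mul_smul, Matrix.mul_smul,
      ← mul_assoc P₀, hPBi, Matrix.smul_mul, smul_smul, ← mul_assoc P₀ W' P₀]
  -- RHS computation
  have hRHS : P₀ * ((-Complex.I) • ((W t₀)⁻¹ * W')) * P₀ =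
      (-Complex.I * (starRingEnd ℂ) w₀) • (P₀ * W' * P₀) := by
    rw [Matrix.mul_smul, Matrix.smul_mul, ← mul_assoc, hPWinv, Matrix.smul_mul,
      Matrix.smul_mul, smul_smul]
  -- scalar identity
  have hz1 : z * (starRingEnd ℂ) z = 1 := by
    have hconj : (starRingEnd ℂ) ((θ : ℂ) * Complex.I) = -((θ : ℂ) * Complex.I) := by
      simp [_root_.map_mul, Complex.conj_ofReal, Complex.conj_I]
    rw [hz, ← Complex.exp_conj, hconj, ← Complex.exp_add, add_neg_cancel, Complex.exp_zero]
  have hkey0 : z * ((starRingEnd ℂ) z - (starRingEnd ℂ) w₀) = -((starRingEnd ℂ) w₀) * (z - w₀) := by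
    linear_combination hz1 - hw₀conj
  have habs : ((‖z - w₀‖ ^ 2 : ℝ) : ℂ) = (z - w₀) * (starRingEnd ℂ) (z - w₀) := by
    rw [Complex.sq_norm]
    exact (Complex.mul_conj _).symm
  have hconjne : (starRingEnd ℂ) (z - w₀) ≠ 0 := by
    intro h
    apply hzw0
    have h2 := congrArg (starRingEnd ℂ) h
    simpa using h2
  have hscal : ((Complex.I + Complex.I * ((z + w₀) * (z - w₀)⁻¹)) * (z - w₀)⁻¹)
      = (((2 / ‖z - w₀‖ ^ 2 : ℝ)) : ℂ) * (-Complex.I * (starRingEnd ℂ) w₀) := by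
    have hconjne' : (starRingEnd ℂ) z - (starRingEnd ℂ) w₀ ≠ 0 := by
      rw [← _root_.map_sub]; exact hconjne
    rw [Complex.ofReal_div, Complex.ofReal_ofNat, habs]
    field_simp [hconjne']
    rw [_root_.map_sub]; linear_combination 2 * hkey0
  rw [hLHS, hRHS, smul_smul, hscal]
end
end

section
/- Let 𝐗₁(t) = (X₁(t); Y₁(t)) and 𝐗₂(t) = (X₂(t); Y₂(t)) be differentiable paths of frames for Lagrangian subspaces of ℂ^{2n}, and set W̃₁(t) = (X₁(t) + iY₁(t))(X₁(t) − iY₁(t))^{-1}, W̃₂(t) = (X₂(t) − iY₂(t))(X₂(t) + iY₂(t))^{-1}, and W̃(t) = −W̃₁(t)W̃₂(t). Then W̃₁' = iW̃₁Ω̃₁ with Ω̃₁ = −2((X₁ − iY₁)^{-1})* 𝐗₁* J 𝐗₁' (X₁ − iY₁)^{-1}, W̃₂' = iW̃₂Ω̃₂ with Ω̃₂ = 2((X₂ + iY₂)^{-1})* 𝐗₂* J 𝐗₂' (X₂ + iY₂)^{-1}, and W̃' = iW̃Ω̃ with Ω̃ = W̃₂* Ω̃₁ W̃₂ + Ω̃₂.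 -/
open Matrix

noncomputable section

def W1 {n : ℕ} (X Y : Matrix (Fin n) (Fin n) ℂ) : Matrix (Fin n) (Fin n) ℂ :=
  (X + Complex.I • Y) * (X - Complex.I • Y)⁻¹

def W2 {n : ℕ} (X Y : Matrix (Fin n) (Fin n) ℂ) : Matrix (Fin n) (Fin n) ℂ :=
  (X - Complex.I • Y) * (X + Complex.I • Y)⁻¹

/-- `Ω̃₁ = −2((X − iY)⁻¹)* 𝐗* J 𝐗' (X − iY)⁻¹`. -/
def Om1 {n : ℕ} (X Y X' Y' : Matrix (Fin n) (Fin n) ℂ) : Matrix (Fin n) (Fin n) ℂ :=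
  (-2 : ℂ) • (((X - Complex.I • Y)⁻¹)ᴴ *
    ((frame X Y)ᴴ * (Jmat n * frame X' Y')) * (X - Complex.I • Y)⁻¹)

/-- `Ω̃₂ = 2((X + iY)⁻¹)* 𝐗* J 𝐗' (X + iY)⁻¹`. -/
def Om2 {n : ℕ} (X Y X' Y' : Matrix (Fin n) (Fin n) ℂ) : Matrix (Fin n) (Fin n) ℂ :=
  (2 : ℂ) • (((X + Complex.I • Y)⁻¹)ᴴ *
    ((frame X Y)ᴴ * (Jmat n * frame X' Y')) * (X + Complex.I • Y)⁻¹)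


attribute [local instance] Matrix.linftyOpNormedAddCommGroup Matrix.linftyOpNormedRing
  Matrix.linftyOpNormedSpace Matrix.linftyOpNormedAlgebra

variable {n : ℕ}

local instance : CompleteSpace (Matrix (Fin n) (Fin n) ℂ) :=
  FiniteDimensional.complete ℝ _

def matEquiv : Matrix (Fin n) (Fin n) ℂ ≃ₗ[ℝ] (Fin n → Fin n → ℂ) :=
  { Matrix.of.symm with map_add' := fun _ _ => rfl, map_smul' := fun _ _ => rfl }

def matCLE : Matrix (Fin n) (Fin n) ℂ ≃L[ℝ] (Fin n → Fin n → ℂ) :=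
  (matEquiv).toContinuousLinearEquiv

lemma hasDerivAt_matrix {f : ℝ → Matrix (Fin n) (Fin n) ℂ} {f' : Matrix (Fin n) (Fin n) ℂ}
    {t₀ : ℝ} : HasDerivAt f f' t₀ ↔ ∀ i j, HasDerivAt (fun t => f t i j) (f' i j) t₀ := by
  have key : HasDerivAt f f' t₀ ↔ HasDerivAt (fun t => matCLE (f t)) (matCLE f') t₀ := by
    constructor
    · intro h
      exact (matCLE.toContinuousLinearMap.hasFDerivAt).comp_hasDerivAt t₀ h
    · intro h
      have := (matCLE.symm.toContinuousLinearMap.hasFDerivAt).comp_hasDerivAt t₀ h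
      simp only [Function.comp_def, ContinuousLinearEquiv.symm_apply_apply] at this
      exact this
  rw [key, hasDerivAt_pi]
  refine forall_congr' fun i => ?_
  rw [hasDerivAt_pi]
  rfl

lemma hasDerivAt_inv_mat {A : ℝ → Matrix (Fin n) (Fin n) ℂ} {A' : Matrix (Fin n) (Fin n) ℂ}
    {t₀ : ℝ} (hA : HasDerivAt A A' t₀) (hu : IsUnit (A t₀)) :
    HasDerivAt (fun t => (A t)⁻¹) (-((A t₀)⁻¹ * A' * (A t₀)⁻¹)) t₀ := by
  have h1 := (hasFDerivAt_ringInverse (𝕜 := ℝ) hu.unit).comp_hasDerivAt t₀ hA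
  have h2 : ∀ t, (A t)⁻¹ = Ring.inverse (A t) := fun t => Matrix.nonsing_inv_eq_ringInverse _
  simp only [h2]
  have h3 : (↑hu.unit⁻¹ : Matrix (Fin n) (Fin n) ℂ) = Ring.inverse (A t₀) := by
    have h4 := Ring.inverse_unit hu.unit
    rw [hu.unit_spec] at h4
    exact h4.symm
  refine h1.congr_deriv ?_
  simp [ContinuousLinearMap.mulLeftRight_apply, h3, h2]

lemma frameJ (X Y X' Y' : Matrix (Fin n) (Fin n) ℂ) :
    (frame X Y)ᴴ * (Jmat n * frame X' Y') = Yᴴ * X' - Xᴴ * Y' := by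
  rw [frame, frame, Jmat, fromBlocks_mul_fromRows,
    conjTranspose_fromRows_eq_fromCols_conjTranspose, fromCols_mul_fromRows]
  simp only [Matrix.zero_mul, Matrix.one_mul, Matrix.neg_mul, Matrix.mul_neg,
    zero_add, add_zero]
  abel

lemma frameId (X Y : Matrix (Fin n) (Fin n) ℂ) :
    (frame X Y)ᴴ * frame X Y = Xᴴ * X + Yᴴ * Y := by
  rw [frame, conjTranspose_fromRows_eq_fromCols_conjTranspose, fromCols_mul_fromRows]

lemma Jmat_conjTranspose : (Jmat n)ᴴ = -(Jmat n) := by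
  simp only [Jmat, fromBlocks_conjTranspose]
  simp [Matrix.fromBlocks_neg]

lemma lag_matrix {X Y : Matrix (Fin n) (Fin n) ℂ} (h : IsLagrangianFrame X Y) :
    Yᴴ * X - Xᴴ * Y = 0 := by
  rw [← frameJ]
  ext k l
  have hk : (frame X Y)ᵀ k ∈ frameSpan X Y :=
    Submodule.subset_span (Set.mem_range_self k)
  have hl : (frame X Y)ᵀ l ∈ frameSpan X Y :=
    Submodule.subset_span (Set.mem_range_self l)
  have h0 := h.2 _ hk _ hl
  rw [star_mulVec, ← dotProduct_mulVec _ _ ((frame X Y)ᵀ l)] at h0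
  rw [Jmat_conjTranspose, neg_mulVec, dotProduct_neg, neg_eq_zero] at h0
  have hentry : ((frame X Y)ᴴ * (Jmat n * frame X Y)) k l
      = star ((frame X Y)ᵀ k) ⬝ᵥ (Jmat n *ᵥ (frame X Y)ᵀ l) := by
    simp [Matrix.mul_apply, dotProduct, mulVec, conjTranspose_apply]
  rw [hentry, h0]
  rfl

lemma conj_sub_mul (X Y X' Y' : Matrix (Fin n) (Fin n) ℂ) :
    (X - Complex.I • Y)ᴴ * (X' - Complex.I • Y')
      = (Xᴴ * X' + Yᴴ * Y') + Complex.I • (Yᴴ * X' - Xᴴ * Y') := by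
  simp only [conjTranspose_sub, conjTranspose_smul, Complex.star_def, Complex.conj_I,
    sub_mul, mul_sub, add_mul, mul_add, smul_mul_assoc, mul_smul_comm, smul_smul,
    Complex.I_mul_I, smul_sub, smul_add, neg_smul, neg_mul, mul_neg, one_smul, neg_neg,
    sub_neg_eq_add]
  match_scalars <;> simp [Complex.I_sq]

lemma conj_add_mul (X Y X' Y' : Matrix (Fin n) (Fin n) ℂ) :
    (X + Complex.I • Y)ᴴ * (X' + Complex.I • Y')
      = (Xᴴ * X' + Yᴴ * Y') - Complex.I • (Yᴴ * X' - Xᴴ * Y') := by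
  simp only [conjTranspose_add, conjTranspose_smul, Complex.star_def, Complex.conj_I,
    sub_mul, mul_sub, add_mul, mul_add, smul_mul_assoc, mul_smul_comm, smul_smul,
    Complex.I_mul_I, smul_sub, smul_add, neg_smul, neg_mul, mul_neg, one_smul, neg_neg,
    sub_neg_eq_add]
  match_scalars <;> simp [Complex.I_sq]

open scoped ComplexOrder in
lemma lag_isUnit {X Y : Matrix (Fin n) (Fin n) ℂ} (h : IsLagrangianFrame X Y) :
    IsUnit (X - Complex.I • Y) ∧ IsUnit (X + Complex.I • Y) := by
  have hJ0 := lag_matrix h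
  have hinj : Function.Injective (frame X Y).mulVec := by
    rw [Matrix.mulVec_injective_iff]
    rw [linearIndependent_iff_card_eq_finrank_span, Fintype.card_fin]
    exact (h.1).symm
  have main : ∀ C : Matrix (Fin n) (Fin n) ℂ,
      Cᴴ * C = (frame X Y)ᴴ * frame X Y → IsUnit C := by
    intro C hC
    rw [← Matrix.mulVec_injective_iff_isUnit]
    intro v w hvw
    have h0 : C *ᵥ (v - w) = 0 := by rw [mulVec_sub, hvw, sub_self]
    have h1 : (frame X Y) *ᵥ (v - w) = 0 := by
      have h2 : star (frame X Y *ᵥ (v - w)) ⬝ᵥ (frame X Y *ᵥ (v - w)) = 0 := by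
        rw [star_mulVec, ← dotProduct_mulVec, mulVec_mulVec, ← hC, ← mulVec_mulVec, h0,
          mulVec_zero, dotProduct_zero]
      exact dotProduct_star_self_eq_zero.mp h2
    have h3 : v - w = 0 := by
      apply hinj
      rw [h1, mulVec_zero]
    exact sub_eq_zero.mp h3
  constructor
  · exact main _ (by rw [conj_sub_mul, hJ0, smul_zero, add_zero, frameId])
  · exact main _ (by rw [conj_add_mul, hJ0, smul_zero, sub_zero, frameId])

lemma isUnit_conjT {A : Matrix (Fin n) (Fin n) ℂ} (h : IsUnit A) : IsUnit Aᴴ := by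
  rw [Matrix.isUnit_iff_isUnit_det] at h ⊢
  rw [det_conjTranspose]
  exact h.star

lemma key_alg {P Q P' Q' M : Matrix (Fin n) (Fin n) ℂ} (hP : IsUnit P) (hQ : IsUnit Q)
    (hU : Qᴴ * Q = Pᴴ * P) (c : ℂ) (hD : Qᴴ * Q' - Pᴴ * P' = c • M) :
    Q' * P⁻¹ + Q * -(P⁻¹ * P' * P⁻¹) = c • (Q * P⁻¹ * ((P⁻¹)ᴴ * M * P⁻¹)) := by
  have hPd : IsUnit P.det := (Matrix.isUnit_iff_isUnit_det P).mp hP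
  have hQHd : IsUnit (Qᴴ).det := (Matrix.isUnit_iff_isUnit_det _).mp (isUnit_conjT hQ)
  have hPHd : IsUnit (Pᴴ).det := (Matrix.isUnit_iff_isUnit_det _).mp (isUnit_conjT hP)
  have cancel : ∀ U V : Matrix (Fin n) (Fin n) ℂ, Qᴴ * U = Qᴴ * V → U = V := by
    intro U V hUV
    have := congrArg (fun W => (Qᴴ)⁻¹ * W) hUV
    simpa [← Matrix.mul_assoc, Matrix.nonsing_inv_mul _ hQHd] using this
  have hQ' : Qᴴ * Q' = Pᴴ * P' + c • M := by
    rw [← hD]; abel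
  apply cancel
  have e1 : Qᴴ * (Q' * P⁻¹ + Q * -(P⁻¹ * P' * P⁻¹)) = c • (M * P⁻¹) := by
    simp only [Matrix.mul_add, Matrix.mul_neg, ← Matrix.mul_assoc]
    rw [hQ', hU]
    simp only [Matrix.add_mul, Matrix.smul_mul, Matrix.mul_assoc]
    rw [Matrix.mul_nonsing_inv_cancel_left _ _ hPd]
    abel
  have e2 : Qᴴ * (c • (Q * P⁻¹ * ((P⁻¹)ᴴ * M * P⁻¹))) = c • (M * P⁻¹) := by
    rw [Matrix.mul_smul]
    congr 1
    rw [conjTranspose_nonsing_inv]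
    simp only [← Matrix.mul_assoc]
    rw [hU]
    rw [Matrix.mul_nonsing_inv_cancel_right _ _ hPd]
    rw [Matrix.mul_nonsing_inv _ hPHd, Matrix.one_mul]
  rw [e1, e2]

lemma W1_hasDerivAt (X Y : ℝ → Matrix (Fin n) (Fin n) ℂ) (X' Y' : Matrix (Fin n) (Fin n) ℂ)
    (t₀ : ℝ) (hL : ∀ t, IsLagrangianFrame (X t) (Y t))
    (hdX : ∀ i j, HasDerivAt (fun t => X t i j) (X' i j) t₀)
    (hdY : ∀ i j, HasDerivAt (fun t => Y t i j) (Y' i j) t₀) :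
    HasDerivAt (fun t => W1 (X t) (Y t))
      (Complex.I • (W1 (X t₀) (Y t₀) * Om1 (X t₀) (Y t₀) X' Y')) t₀ := by
  have hA : HasDerivAt (fun t => X t - Complex.I • Y t) (X' - Complex.I • Y') t₀ := by
    refine hasDerivAt_matrix.mpr fun i j => ?_
    have := (hdX i j).sub ((hdY i j).const_mul Complex.I)
    simpa [Matrix.sub_apply, Matrix.smul_apply, smul_eq_mul, Pi.sub_def, Pi.add_def] using this
  have hB : HasDerivAt (fun t => X t + Complex.I • Y t) (X' + Complex.I • Y') t₀ := by
    refine hasDerivAt_matrix.mpr fun i j => ?_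
    have := (hdX i j).add ((hdY i j).const_mul Complex.I)
    simpa [Matrix.add_apply, Matrix.smul_apply, smul_eq_mul, Pi.sub_def, Pi.add_def] using this
  obtain ⟨huA, huB⟩ := lag_isUnit (hL t₀)
  have hJ0 := lag_matrix (hL t₀)
  have hU : (X t₀ + Complex.I • Y t₀)ᴴ * (X t₀ + Complex.I • Y t₀)
      = (X t₀ - Complex.I • Y t₀)ᴴ * (X t₀ - Complex.I • Y t₀) := by
    rw [conj_add_mul, conj_sub_mul, hJ0, smul_zero, add_zero, sub_zero]
  have hD : (X t₀ + Complex.I • Y t₀)ᴴ * (X' + Complex.I • Y')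
        - (X t₀ - Complex.I • Y t₀)ᴴ * (X' - Complex.I • Y')
      = (Complex.I * (-2)) • ((frame (X t₀) (Y t₀))ᴴ * (Jmat n * frame X' Y')) := by
    rw [conj_add_mul, conj_sub_mul, frameJ]
    module
  have hmain := hB.mul (hasDerivAt_inv_mat hA huA)
  have hval := key_alg huA huB hU (Complex.I * (-2)) hD
  refine hmain.congr_deriv ?_
  rw [hval, W1, Om1]
  rw [Matrix.mul_smul, smul_smul]

lemma W2_hasDerivAt (X Y : ℝ → Matrix (Fin n) (Fin n) ℂ) (X' Y' : Matrix (Fin n) (Fin n) ℂ)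
    (t₀ : ℝ) (hL : ∀ t, IsLagrangianFrame (X t) (Y t))
    (hdX : ∀ i j, HasDerivAt (fun t => X t i j) (X' i j) t₀)
    (hdY : ∀ i j, HasDerivAt (fun t => Y t i j) (Y' i j) t₀) :
    HasDerivAt (fun t => W2 (X t) (Y t))
      (Complex.I • (W2 (X t₀) (Y t₀) * Om2 (X t₀) (Y t₀) X' Y')) t₀ := by
  have hA : HasDerivAt (fun t => X t - Complex.I • Y t) (X' - Complex.I • Y') t₀ := by
    refine hasDerivAt_matrix.mpr fun i j => ?_
    have := (hdX i j).sub ((hdY i j).const_mul Complex.I)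
    simpa [Matrix.sub_apply, Matrix.smul_apply, smul_eq_mul, Pi.sub_def, Pi.add_def] using this
  have hB : HasDerivAt (fun t => X t + Complex.I • Y t) (X' + Complex.I • Y') t₀ := by
    refine hasDerivAt_matrix.mpr fun i j => ?_
    have := (hdX i j).add ((hdY i j).const_mul Complex.I)
    simpa [Matrix.add_apply, Matrix.smul_apply, smul_eq_mul, Pi.sub_def, Pi.add_def] using this
  obtain ⟨huA, huB⟩ := lag_isUnit (hL t₀)
  have hJ0 := lag_matrix (hL t₀)
  have hU : (X t₀ - Complex.I • Y t₀)ᴴ * (X t₀ - Complex.I • Y t₀)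
      = (X t₀ + Complex.I • Y t₀)ᴴ * (X t₀ + Complex.I • Y t₀) := by
    rw [conj_add_mul, conj_sub_mul, hJ0, smul_zero, add_zero, sub_zero]
  have hD : (X t₀ - Complex.I • Y t₀)ᴴ * (X' - Complex.I • Y')
        - (X t₀ + Complex.I • Y t₀)ᴴ * (X' + Complex.I • Y')
      = (Complex.I * 2) • ((frame (X t₀) (Y t₀))ᴴ * (Jmat n * frame X' Y')) := by
    rw [conj_add_mul, conj_sub_mul, frameJ]
    module
  have hmain := hA.mul (hasDerivAt_inv_mat hB huB)
  have hval := key_alg huB huA hU (Complex.I * 2) hD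
  refine hmain.congr_deriv ?_
  rw [hval, W2, Om2]
  rw [Matrix.mul_smul, smul_smul]

lemma W2_unitary {X Y : Matrix (Fin n) (Fin n) ℂ} (h : IsLagrangianFrame X Y) :
    W2 X Y * (W2 X Y)ᴴ = 1 := by
  obtain ⟨huA, huB⟩ := lag_isUnit h
  have hJ0 := lag_matrix h
  have hBd : IsUnit (X + Complex.I • Y).det := (Matrix.isUnit_iff_isUnit_det _).mp huB
  have hBHd : IsUnit ((X + Complex.I • Y)ᴴ).det :=
    (Matrix.isUnit_iff_isUnit_det _).mp (isUnit_conjT huB)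
  have hU : (X - Complex.I • Y)ᴴ * (X - Complex.I • Y)
      = (X + Complex.I • Y)ᴴ * (X + Complex.I • Y) := by
    rw [conj_add_mul, conj_sub_mul, hJ0, smul_zero, add_zero, sub_zero]
  rw [← mul_eq_one_comm]
  rw [W2, Matrix.conjTranspose_mul, conjTranspose_nonsing_inv]
  calc ((X + Complex.I • Y)ᴴ)⁻¹ * (X - Complex.I • Y)ᴴ
        * ((X - Complex.I • Y) * (X + Complex.I • Y)⁻¹)
      = ((X + Complex.I • Y)ᴴ)⁻¹ * ((X - Complex.I • Y)ᴴ
        * (X - Complex.I • Y)) * (X + Complex.I • Y)⁻¹ := by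
        simp only [Matrix.mul_assoc]
    _ = ((X + Complex.I • Y)ᴴ)⁻¹ * ((X + Complex.I • Y)ᴴ
        * (X + Complex.I • Y)) * (X + Complex.I • Y)⁻¹ := by rw [hU]
    _ = 1 := by
        rw [Matrix.nonsing_inv_mul_cancel_left _ _ hBHd, Matrix.mul_nonsing_inv _ hBd]

/-- For differentiable paths of Lagrangian frames `𝐗₁(t)`, `𝐗₂(t)`, with
`W̃₁ = (X₁ + iY₁)(X₁ − iY₁)⁻¹`, `W̃₂ = (X₂ − iY₂)(X₂ + iY₂)⁻¹`, `W̃ = −W̃₁W̃₂`: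
`W̃₁' = iW̃₁Ω̃₁`, `W̃₂' = iW̃₂Ω̃₂`, and `W̃' = iW̃Ω̃` with `Ω̃ = W̃₂*Ω̃₁W̃₂ + Ω̃₂`. -/
theorem unitary_path_derivatives {n : ℕ} (X₁ Y₁ X₂ Y₂ : ℝ → Matrix (Fin n) (Fin n) ℂ)
    (X₁' Y₁' X₂' Y₂' : Matrix (Fin n) (Fin n) ℂ) (t₀ : ℝ)
    (hL₁ : ∀ t, IsLagrangianFrame (X₁ t) (Y₁ t))
    (hL₂ : ∀ t, IsLagrangianFrame (X₂ t) (Y₂ t))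
    (hdX₁ : ∀ i j, HasDerivAt (fun t => X₁ t i j) (X₁' i j) t₀)
    (hdY₁ : ∀ i j, HasDerivAt (fun t => Y₁ t i j) (Y₁' i j) t₀)
    (hdX₂ : ∀ i j, HasDerivAt (fun t => X₂ t i j) (X₂' i j) t₀)
    (hdY₂ : ∀ i j, HasDerivAt (fun t => Y₂ t i j) (Y₂' i j) t₀) :
    (∀ i j, HasDerivAt (fun t => W1 (X₁ t) (Y₁ t) i j)
      ((Complex.I • (W1 (X₁ t₀) (Y₁ t₀) * Om1 (X₁ t₀) (Y₁ t₀) X₁' Y₁')) i j) t₀) ∧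
    (∀ i j, HasDerivAt (fun t => W2 (X₂ t) (Y₂ t) i j)
      ((Complex.I • (W2 (X₂ t₀) (Y₂ t₀) * Om2 (X₂ t₀) (Y₂ t₀) X₂' Y₂')) i j) t₀) ∧
    (∀ i j, HasDerivAt (fun t => (-(W1 (X₁ t) (Y₁ t) * W2 (X₂ t) (Y₂ t))) i j)
      ((Complex.I • ((-(W1 (X₁ t₀) (Y₁ t₀) * W2 (X₂ t₀) (Y₂ t₀))) *
        ((W2 (X₂ t₀) (Y₂ t₀))ᴴ * Om1 (X₁ t₀) (Y₁ t₀) X₁' Y₁' * W2 (X₂ t₀) (Y₂ t₀) +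
          Om2 (X₂ t₀) (Y₂ t₀) X₂' Y₂'))) i j) t₀) := by
  have h1 := W1_hasDerivAt X₁ Y₁ X₁' Y₁' t₀ hL₁ hdX₁ hdY₁
  have h2 := W2_hasDerivAt X₂ Y₂ X₂' Y₂' t₀ hL₂ hdX₂ hdY₂
  refine ⟨hasDerivAt_matrix.mp h1, hasDerivAt_matrix.mp h2, ?_⟩
  have h3 := (h1.mul h2).neg
  have hu2 := W2_unitary (hL₂ t₀)
  have hc : ∀ Z : Matrix (Fin n) (Fin n) ℂ,
      W2 (X₂ t₀) (Y₂ t₀) * ((W2 (X₂ t₀) (Y₂ t₀))ᴴ * Z) = Z := fun Z => by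
    rw [← Matrix.mul_assoc, hu2, Matrix.one_mul]
  refine hasDerivAt_matrix.mp ?_
  refine h3.congr_deriv ?_
  simp only [Matrix.mul_add, Matrix.neg_mul, Matrix.smul_mul, Matrix.mul_smul,
    Matrix.mul_assoc, hc]
  module
end
end
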